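/- In polar coordinates z = r e^{iθ}, the complex Hermite polynomial with α > 0 satisfies H^α_{m,p}(re^{iθ}, re^{−iθ}) = α^p m! (−1)^m e^{iθ(p−m)} r^{p−m} L_m^{p−m}(α r²), where L_m^β denotes the generalized Laguerre polynomial, valid for p ≥ m. -/

import Mathlib

open Complex Nat Finset

/-- Wirtinger derivative `∂_z`. -/
noncomputable def wirtingerZ : (ℂ → ℂ) → (ℂ → ℂ) := fun f z =>
  (1 / 2 : ℂ) * (fderiv ℝ f z 1 - Complex.I * fderiv ℝ f z Complex.I)

/-- Anti-Wirtinger derivative `∂_z̄`. -/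
noncomputable def wirtingerZBar : (ℂ → ℂ) → (ℂ → ℂ) := fun f z =>
  (1 / 2 : ℂ) * (fderiv ℝ f z 1 + Complex.I * fderiv ℝ f z Complex.I)

/-- Complex Hermite polynomials
`H^α_{m,p}(z, z̄) = (-1)^{m+p} e^{α|z|²} ∂_z^m ∂_z̄^p e^{-α|z|²}`. -/
noncomputable def cHermite (α : ℝ) (m p : ℕ) (z : ℂ) : ℂ :=
  (-1) ^ (m + p) * Complex.exp ((α : ℂ) * (z * (starRingEnd ℂ) z))
    * (wirtingerZ^[m] (wirtingerZBar^[p]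
        (fun w => Complex.exp (-(α : ℂ) * (w * (starRingEnd ℂ) w))))) z

/-- Generalized Laguerre polynomial `L_m^β(x) = ∑_{k=0}^m (−1)^k C(m+β, m−k) x^k / k!`. -/
noncomputable def laguerre (m β : ℕ) (x : ℝ) : ℝ :=
  ∑ k ∈ Finset.range (m + 1),
    (-1) ^ k * (Nat.choose (m + β) (m - k) : ℝ) * x ^ k / (k ! : ℝ)

noncomputable def Gc (α : ℝ) (a b : ℕ) (w : ℂ) : ℂ :=
  w ^ a * ((starRingEnd ℂ) w) ^ b * Complex.exp (-(α : ℂ) * (w * (starRingEnd ℂ) w))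

lemma hasFDerivAt_conj (w : ℂ) :
    HasFDerivAt (starRingEnd ℂ) (Complex.conjCLE.toContinuousLinearMap) w := by
  have h : ⇑Complex.conjCLE = ⇑(starRingEnd ℂ) := funext Complex.conjCLE_apply
  have := Complex.conjCLE.hasFDerivAt (x := w)
  rwa [h] at this

lemma hasFDerivAt_Gc (α : ℝ) (a b : ℕ) (w : ℂ) :
    ∃ D : ℂ →L[ℝ] ℂ, HasFDerivAt (Gc α a b) D w ∧ ∀ v : ℂ,
      D v = ((a : ℂ) * w ^ (a - 1) * ((starRingEnd ℂ) w) ^ b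
              - (α : ℂ) * w ^ a * ((starRingEnd ℂ) w) ^ (b + 1))
              * Complex.exp (-(α : ℂ) * (w * (starRingEnd ℂ) w)) * v
          + ((b : ℂ) * w ^ a * ((starRingEnd ℂ) w) ^ (b - 1)
              - (α : ℂ) * w ^ (a + 1) * ((starRingEnd ℂ) w) ^ b)
              * Complex.exp (-(α : ℂ) * (w * (starRingEnd ℂ) w)) * (starRingEnd ℂ) v := by
  have hP : HasFDerivAt (fun w : ℂ => w ^ a)
      ((ContinuousLinearMap.smulRight (1 : ℂ →L[ℂ] ℂ) ((a : ℂ) * w ^ (a - 1))).restrictScalars ℝ) w :=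
    ((hasDerivAt_pow a w).hasFDerivAt).restrictScalars ℝ
  have hQ : HasFDerivAt (fun w : ℂ => ((starRingEnd ℂ) w) ^ b)
      (((ContinuousLinearMap.smulRight (1 : ℂ →L[ℂ] ℂ)
          ((b : ℂ) * ((starRingEnd ℂ) w) ^ (b - 1))).restrictScalars ℝ).comp
        Complex.conjCLE.toContinuousLinearMap) w :=
    (((hasDerivAt_pow b ((starRingEnd ℂ) w)).hasFDerivAt).restrictScalars ℝ).comp w
      (hasFDerivAt_conj w)
  have hmul : HasFDerivAt (fun y : ℂ => y * (starRingEnd ℂ) y)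
      (w • Complex.conjCLE.toContinuousLinearMap
        + (ContinuousLinearMap.id ℝ ℂ).smulRight ((starRingEnd ℂ) w)) w :=
    (hasFDerivAt_id w).mul' (hasFDerivAt_conj w)
  have hg := hmul.const_mul (-(α : ℂ))
  have hexp : HasFDerivAt Complex.exp
      ((ContinuousLinearMap.smulRight (1 : ℂ →L[ℂ] ℂ)
        (Complex.exp (-(α : ℂ) * (w * (starRingEnd ℂ) w)))).restrictScalars ℝ)
      (-(α : ℂ) * (w * (starRingEnd ℂ) w)) :=
    ((Complex.hasDerivAt_exp _).hasFDerivAt).restrictScalars ℝ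
  have hR := hexp.comp w hg
  have H := (hP.mul hQ).mul hR
  refine ⟨_, H, fun v => ?_⟩
  simp [ContinuousLinearMap.add_apply, ContinuousLinearMap.smul_apply,
    ContinuousLinearMap.smulRight_apply, ContinuousLinearMap.comp_apply,
    ContinuousLinearMap.coe_restrictScalars', ContinuousLinearMap.one_apply,
    ContinuousLinearMap.id_apply, Complex.conjCLE_apply, Function.comp, smul_eq_mul]
  ring

lemma differentiableAt_Gc (α : ℝ) (a b : ℕ) (w : ℂ) : DifferentiableAt ℝ (Gc α a b) w := by
  obtain ⟨D, H, -⟩ := hasFDerivAt_Gc α a b w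
  exact H.differentiableAt

lemma wirtingerZ_Gc (α : ℝ) (a b : ℕ) (w : ℂ) :
    wirtingerZ (Gc α a b) w = (a : ℂ) * Gc α (a - 1) b w - (α : ℂ) * Gc α a (b + 1) w := by
  obtain ⟨D, H, hD⟩ := hasFDerivAt_Gc α a b w
  simp only [wirtingerZ, H.fderiv, hD, Gc, map_one, Complex.conj_I]
  ring_nf
  simp [Complex.I_sq]
  ring

lemma wirtingerZBar_Gc (α : ℝ) (a b : ℕ) (w : ℂ) :
    wirtingerZBar (Gc α a b) w = (b : ℂ) * Gc α a (b - 1) w - (α : ℂ) * Gc α (a + 1) b w := by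
  obtain ⟨D, H, hD⟩ := hasFDerivAt_Gc α a b w
  simp only [wirtingerZBar, H.fderiv, hD, Gc, map_one, Complex.conj_I]
  ring_nf
  simp [Complex.I_sq]
  ring

lemma wirtingerZ_sum {ι : Type*} (s : Finset ι) (f : ι → ℂ → ℂ) (w : ℂ)
    (h : ∀ i ∈ s, DifferentiableAt ℝ (f i) w) :
    wirtingerZ (fun z => ∑ i ∈ s, f i z) w = ∑ i ∈ s, wirtingerZ (f i) w := by
  have H : HasFDerivAt (fun z => ∑ i ∈ s, f i z) (∑ i ∈ s, fderiv ℝ (f i) w) w :=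
    HasFDerivAt.fun_sum fun i hi => (h i hi).hasFDerivAt
  simp only [wirtingerZ, H.fderiv, ContinuousLinearMap.sum_apply]
  rw [Finset.mul_sum, ← Finset.sum_sub_distrib, Finset.mul_sum]

lemma wirtingerZ_const_mul (c : ℂ) (f : ℂ → ℂ) (w : ℂ) (h : DifferentiableAt ℝ f w) :
    wirtingerZ (fun z => c * f z) w = c * wirtingerZ f w := by
  have H : HasFDerivAt (fun z => c * f z) (c • fderiv ℝ f w) w :=
    h.hasFDerivAt.const_mul c
  simp only [wirtingerZ, H.fderiv, ContinuousLinearMap.smul_apply, smul_eq_mul]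
  ring

lemma wirtingerZBar_const_mul (c : ℂ) (f : ℂ → ℂ) (w : ℂ) (h : DifferentiableAt ℝ f w) :
    wirtingerZBar (fun z => c * f z) w = c * wirtingerZBar f w := by
  have H : HasFDerivAt (fun z => c * f z) (c • fderiv ℝ f w) w :=
    h.hasFDerivAt.const_mul c
  simp only [wirtingerZBar, H.fderiv, ContinuousLinearMap.smul_apply, smul_eq_mul]
  ring

lemma zbar_iter (α : ℝ) (p : ℕ) :
    wirtingerZBar^[p] (fun w => Complex.exp (-(α : ℂ) * (w * (starRingEnd ℂ) w)))
      = fun w => (-(α : ℂ)) ^ p * Gc α p 0 w := by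
  induction p with
  | zero => funext w; simp [Gc]
  | succ p ih =>
      rw [Function.iterate_succ_apply', ih]
      funext w
      rw [wirtingerZBar_const_mul _ _ _ (differentiableAt_Gc α p 0 w), wirtingerZBar_Gc]
      simp
      ring

lemma choose_sum_shift (n : ℕ) (t : ℕ → ℂ) :
    ∑ k ∈ Finset.range (n+1), (n.choose k : ℂ) * (t (k+1) + t k)
      = ∑ k ∈ Finset.range (n+2), ((n+1).choose k : ℂ) * t k := by
  have h1 : ∑ k ∈ Finset.range (n+1), (n.choose k : ℂ) * t k
      = ∑ k ∈ Finset.range (n+2), (n.choose k : ℂ) * t k := by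
    rw [Finset.sum_range_succ (n := n+1)]
    simp [Nat.choose_succ_self]
  have h2 : ∑ k ∈ Finset.range (n+1), (n.choose k : ℂ) * t (k+1)
      = ∑ k ∈ Finset.range (n+2),
          (if k = 0 then 0 else (n.choose (k-1) : ℂ)) * t k := by
    rw [Finset.sum_range_succ' (f := fun k => (if k = 0 then 0 else (n.choose (k-1) : ℂ)) * t k)]
    simp
  simp_rw [mul_add]
  rw [Finset.sum_add_distrib, h1, h2, ← Finset.sum_add_distrib]
  refine Finset.sum_congr rfl fun k _ => ?_
  rcases k with _ | j
  · simp
  · have : ((n+1).choose (j+1) : ℂ) = (n.choose j : ℂ) + (n.choose (j+1) : ℂ) := by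
      rw [Nat.choose_succ_succ]; push_cast; ring
    simp only [Nat.succ_ne_zero, if_false, Nat.succ_sub_one, this]
    ring

noncomputable def Fc (α : ℝ) (p m : ℕ) (w : ℂ) : ℂ :=
  ∑ k ∈ Finset.range (m+1),
    (m.choose k : ℂ) * (p.descFactorial k : ℂ) * (-(α : ℂ)) ^ (m-k) * Gc α (p-k) (m-k) w

lemma differentiableAt_Fc (α : ℝ) (p m : ℕ) (w : ℂ) : DifferentiableAt ℝ (Fc α p m) w := by
  apply DifferentiableAt.fun_sum
  intro k _
  exact (differentiableAt_Gc α (p-k) (m-k) w).const_mul _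

lemma wirtingerZ_Fc (α : ℝ) (p m : ℕ) (w : ℂ) :
    wirtingerZ (Fc α p m) w = Fc α p (m+1) w := by
  have h0 : wirtingerZ (Fc α p m) w
      = ∑ k ∈ Finset.range (m+1),
          wirtingerZ (fun z => (m.choose k : ℂ) * (p.descFactorial k : ℂ)
            * (-(α : ℂ)) ^ (m-k) * Gc α (p-k) (m-k) z) w := by
    exact wirtingerZ_sum _ _ w fun k _ => by
      simpa [mul_assoc] using ((differentiableAt_Gc α (p-k) (m-k) w).const_mul
        ((m.choose k : ℂ) * (p.descFactorial k : ℂ) * (-(α : ℂ)) ^ (m-k)))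
  rw [h0]
  have h1 : ∀ k ∈ Finset.range (m+1),
      wirtingerZ (fun z => (m.choose k : ℂ) * (p.descFactorial k : ℂ)
            * (-(α : ℂ)) ^ (m-k) * Gc α (p-k) (m-k) z) w
      = (m.choose k : ℂ) * ((p.descFactorial (k+1) : ℂ) * (-(α : ℂ)) ^ (m+1-(k+1))
            * Gc α (p-(k+1)) (m+1-(k+1)) w
          + (p.descFactorial k : ℂ) * (-(α : ℂ)) ^ (m+1-k) * Gc α (p-k) (m+1-k) w) := by
    intro k hk
    have hk' : k ≤ m := by
      simpa [Nat.lt_succ_iff] using Finset.mem_range.mp hk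
    have := wirtingerZ_const_mul ((m.choose k : ℂ) * (p.descFactorial k : ℂ)
        * (-(α : ℂ)) ^ (m-k)) (Gc α (p-k) (m-k)) w (differentiableAt_Gc α (p-k) (m-k) w)
    rw [show (fun z => (m.choose k : ℂ) * (p.descFactorial k : ℂ)
          * (-(α : ℂ)) ^ (m-k) * Gc α (p-k) (m-k) z)
        = (fun z => ((m.choose k : ℂ) * (p.descFactorial k : ℂ)
          * (-(α : ℂ)) ^ (m-k)) * Gc α (p-k) (m-k) z) from by
        funext z; ring] at *
    rw [this, wirtingerZ_Gc]
    have hd : (p.descFactorial (k+1) : ℂ) = ((p - k : ℕ) : ℂ) * (p.descFactorial k : ℂ) := by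
      rw [Nat.descFactorial_succ]; push_cast; ring
    have he1 : m + 1 - (k+1) = m - k := by omega
    have he2 : m + 1 - k = (m - k) + 1 := by omega
    have he3 : p - (k+1) = p - k - 1 := by omega
    rw [hd, he1, he2, he3, pow_succ]
    ring
  rw [Finset.sum_congr rfl h1]
  rw [choose_sum_shift m (fun k => (p.descFactorial k : ℂ) * (-(α : ℂ)) ^ (m+1-k)
    * Gc α (p-k) (m+1-k) w)]
  unfold Fc
  refine Finset.sum_congr rfl fun k _ => ?_
  ring

lemma z_iter (α : ℝ) (p m : ℕ) :
    wirtingerZ^[m] (fun w => (-(α : ℂ)) ^ p * Gc α p 0 w)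
      = fun w => (-(α : ℂ)) ^ p * Fc α p m w := by
  induction m with
  | zero =>
      funext w
      simp [Fc, Gc]
  | succ m ih =>
      rw [Function.iterate_succ_apply', ih]
      funext w
      rw [wirtingerZ_const_mul _ _ _ (differentiableAt_Fc α p m w), wirtingerZ_Fc]

lemma cHermite_eq (α : ℝ) (m p : ℕ) (z : ℂ) :
    cHermite α m p z = ∑ k ∈ Finset.range (m+1),
      (-1 : ℂ) ^ k * (α : ℂ) ^ (m + p - k) * (m.choose k : ℂ) * (p.descFactorial k : ℂ)
        * z ^ (p - k) * ((starRingEnd ℂ) z) ^ (m - k) := by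
  unfold cHermite
  rw [zbar_iter, z_iter]
  unfold Fc Gc
  simp only [Finset.mul_sum]
  refine Finset.sum_congr rfl fun k hk => ?_
  have hk' : k ≤ m := by simpa [Nat.lt_succ_iff] using Finset.mem_range.mp hk
  have hexp : Complex.exp ((α : ℂ) * (z * (starRingEnd ℂ) z))
      * Complex.exp (-(α : ℂ) * (z * (starRingEnd ℂ) z)) = 1 := by
    rw [← Complex.exp_add, show (α : ℂ) * (z * (starRingEnd ℂ) z)
      + -(α : ℂ) * (z * (starRingEnd ℂ) z) = 0 from by ring, Complex.exp_zero]
  have hsign : (-1 : ℂ) ^ (m + p) * (-(α : ℂ)) ^ p * (-(α : ℂ)) ^ (m - k)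
      = (-1 : ℂ) ^ k * (α : ℂ) ^ (m + p - k) := by
    have h2 : (α : ℂ) ^ p * (α : ℂ) ^ (m - k) = (α : ℂ) ^ (m + p - k) := by
      rw [← pow_add]; congr 1; omega
    have h3 : (-1 : ℂ) ^ (m + p) * (-1 : ℂ) ^ p * (-1 : ℂ) ^ (m - k) = (-1 : ℂ) ^ k := by
      rw [← pow_add, ← pow_add, show m + p + p + (m - k) = k + 2 * (m + p - k) from by omega,
        pow_add, pow_mul]
      simp
    rw [neg_pow ((α:ℂ)) p, neg_pow ((α:ℂ)) (m-k)]
    calc (-1 : ℂ) ^ (m + p) * ((-1 : ℂ) ^ p * (α : ℂ) ^ p)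
          * ((-1 : ℂ) ^ (m - k) * (α : ℂ) ^ (m - k))
        = ((-1 : ℂ) ^ (m + p) * (-1 : ℂ) ^ p * (-1 : ℂ) ^ (m - k))
            * ((α : ℂ) ^ p * (α : ℂ) ^ (m - k)) := by ring
      _ = _ := by rw [h2, h3]
  calc (-1 : ℂ) ^ (m + p) * Complex.exp ((α : ℂ) * (z * (starRingEnd ℂ) z))
        * ((-(α : ℂ)) ^ p * ((m.choose k : ℂ) * (p.descFactorial k : ℂ) * (-(α : ℂ)) ^ (m - k)
          * (z ^ (p - k) * ((starRingEnd ℂ) z) ^ (m - k)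
            * Complex.exp (-(α : ℂ) * (z * (starRingEnd ℂ) z)))))
      = ((-1 : ℂ) ^ (m + p) * (-(α : ℂ)) ^ p * (-(α : ℂ)) ^ (m - k))
          * ((m.choose k : ℂ) * (p.descFactorial k : ℂ) * z ^ (p - k)
            * ((starRingEnd ℂ) z) ^ (m - k))
          * (Complex.exp ((α : ℂ) * (z * (starRingEnd ℂ) z))
            * Complex.exp (-(α : ℂ) * (z * (starRingEnd ℂ) z))) := by ring
    _ = _ := by rw [hexp, hsign]; ring

lemma natkey (m p k : ℕ) (hk : k ≤ m) (hmp : m ≤ p) :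
    m.choose k * p.descFactorial k * (m - k)! = m ! * p.choose k := by
  rw [Nat.descFactorial_eq_factorial_mul_choose, ← Nat.choose_mul_factorial_mul_factorial hk]
  ring

theorem cHermite_polar (α : ℝ) (hα : 0 < α) (m p : ℕ) (hmp : m ≤ p) (r θ : ℝ) :
    cHermite α m p ((r : ℂ) * Complex.exp ((θ : ℂ) * Complex.I))
      = (α : ℂ) ^ p * (m ! : ℂ) * (-1) ^ m
        * Complex.exp ((θ : ℂ) * ((p - m : ℕ) : ℂ) * Complex.I)
        * (r : ℂ) ^ (p - m) * ((laguerre m (p - m) (α * r ^ 2) : ℝ) : ℂ) := by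
  have hlag : ((laguerre m (p - m) (α * r ^ 2) : ℝ) : ℂ)
      = ∑ j ∈ Finset.range (m + 1),
          (-1 : ℂ) ^ j * (p.choose (m - j) : ℂ) * ((α : ℂ) * (r : ℂ) ^ 2) ^ j / (j ! : ℂ) := by
    unfold laguerre
    rw [Nat.add_sub_cancel' hmp]
    push_cast
    rfl
  rw [cHermite_eq, ← Finset.sum_range_reflect, hlag, Finset.mul_sum]
  simp only [Nat.add_sub_cancel]
  refine Finset.sum_congr rfl fun j hj => ?_
  have hj' : j ≤ m := by simpa [Nat.lt_succ_iff] using Finset.mem_range.mp hj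
  rw [show m + p - (m - j) = p + j from by omega, show p - (m - j) = p - m + j from by omega,
    show m - (m - j) = j from by omega]
  have hconj : (starRingEnd ℂ) ((r : ℂ) * Complex.exp ((θ : ℂ) * Complex.I))
      = (r : ℂ) * Complex.exp (-((θ : ℂ) * Complex.I)) := by
    rw [map_mul, Complex.conj_ofReal, ← Complex.exp_conj, map_mul, Complex.conj_ofReal,
      Complex.conj_I, show (θ : ℂ) * -Complex.I = -((θ : ℂ) * Complex.I) from by ring]
  have hfac : ((j ! : ℕ) : ℂ) ≠ 0 := Nat.cast_ne_zero.mpr (Nat.factorial_ne_zero j)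
  have hCD : ((m.choose (m - j) : ℕ) : ℂ) * ((p.descFactorial (m - j) : ℕ) : ℂ)
      = ((m ! : ℕ) : ℂ) * ((p.choose (m - j) : ℕ) : ℂ) / ((j ! : ℕ) : ℂ) := by
    rw [eq_div_iff hfac]
    have := natkey m p (m - j) (by omega) hmp
    rw [show m - (m - j) = j from by omega] at this
    exact_mod_cast this
  have hsj : (-1 : ℂ) ^ (m - j) = (-1 : ℂ) ^ m * (-1 : ℂ) ^ j := by
    rw [← pow_add, show m + j = (m - j) + 2 * j from by omega, pow_add, pow_mul]
    simp
  have hr : (r : ℂ) ^ (p - m + j) * (r : ℂ) ^ j = (r : ℂ) ^ (p - m) * ((r : ℂ) ^ 2) ^ j := by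
    rw [← pow_mul, ← pow_add, ← pow_add]
    congr 1
    omega
  have hE : Complex.exp ((θ : ℂ) * Complex.I) ^ (p - m + j)
        * Complex.exp (-((θ : ℂ) * Complex.I)) ^ j
      = Complex.exp ((θ : ℂ) * ((p - m : ℕ) : ℂ) * Complex.I) := by
    rw [← Complex.exp_nat_mul, ← Complex.exp_nat_mul, ← Complex.exp_add]
    congr 1
    rw [Nat.cast_add, Nat.cast_sub hmp]
    ring
  calc (-1 : ℂ) ^ (m - j) * (α : ℂ) ^ (p + j) * ((m.choose (m - j) : ℕ) : ℂ)
        * ((p.descFactorial (m - j) : ℕ) : ℂ)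
        * ((r : ℂ) * Complex.exp ((θ : ℂ) * Complex.I)) ^ (p - m + j)
        * ((starRingEnd ℂ) ((r : ℂ) * Complex.exp ((θ : ℂ) * Complex.I))) ^ j
      = ((α : ℂ) ^ p * (α : ℂ) ^ j)
          * (((m.choose (m - j) : ℕ) : ℂ) * ((p.descFactorial (m - j) : ℕ) : ℂ))
          * ((-1 : ℂ) ^ (m - j))
          * ((r : ℂ) ^ (p - m + j) * (r : ℂ) ^ j)
          * (Complex.exp ((θ : ℂ) * Complex.I) ^ (p - m + j)
              * Complex.exp (-((θ : ℂ) * Complex.I)) ^ j) := by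
        rw [hconj, mul_pow, mul_pow, pow_add]
        ring
    _ = ((α : ℂ) ^ p * (α : ℂ) ^ j)
          * (((m ! : ℕ) : ℂ) * ((p.choose (m - j) : ℕ) : ℂ) / ((j ! : ℕ) : ℂ))
          * ((-1 : ℂ) ^ m * (-1 : ℂ) ^ j)
          * ((r : ℂ) ^ (p - m) * ((r : ℂ) ^ 2) ^ j)
          * (Complex.exp ((θ : ℂ) * ((p - m : ℕ) : ℂ) * Complex.I)) := by
        rw [hCD, hsj, hr, hE]
    _ = _ := by
        rw [mul_pow]
        ring
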